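/- Consider the explicit CHSH strategy on H_A=H_B=ℂ² with shared state |ψ⟩ = (|0⟩⊗|0⟩ + |1⟩⊗|1⟩)/√2, and with projections [θ] = |θ⟩⟨θ| where |θ⟩ = cos θ|0⟩ + sin θ|1⟩, given by A⁰₀=[0], A⁰₁=[π/2], A¹₀=[π/4], A¹₁=[3π/4], B⁰₀=[π/8], B⁰₁=[5π/8], B¹₀=[−π/8], B¹₁=[3π/8]. Then (1/4)·∑_{a,b∈{0,1}} ∑_{x,y: x⊕y=a·b} ⟨ψ|A^a_x⊗B^b_y|ψ⟩ = cos²(π/8); that is, this quantum strategy wins the CHSH game with probability exactly cos²(π/8). -/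

import Mathlib

noncomputable section

/-- The unit vector `|θ⟩ = cos θ |0⟩ + sin θ |1⟩` in `ℂ²`. -/
def ket (θ : ℝ) : Fin 2 → ℂ := fun i => if i = 0 then (Real.cos θ : ℂ) else (Real.sin θ : ℂ)

/-- The rank-one orthogonal projection `[θ] = |θ⟩⟨θ|` onto the span of `|θ⟩`. -/
def proj (θ : ℝ) : Matrix (Fin 2) (Fin 2) ℂ := fun i j => ket θ i * star (ket θ j)

/-- The maximally entangled state `|ψ⟩ = (|0⟩⊗|0⟩ + |1⟩⊗|1⟩)/√2` on `ℂ²⊗ℂ²`. -/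
def chshPsi : Fin 2 × Fin 2 → ℂ :=
  fun p => if p.1 = p.2 then ((1 / Real.sqrt 2 : ℝ) : ℂ) else 0

/-- Alice's CHSH measurement projections: `A⁰₀=[0]`, `A⁰₁=[π/2]`, `A¹₀=[π/4]`,
`A¹₁=[3π/4]` (indexed by question `a` and answer `x`). -/
def Aop : Bool → Bool → Matrix (Fin 2) (Fin 2) ℂ
  | false, false => proj 0
  | false, true => proj (Real.pi / 2)
  | true, false => proj (Real.pi / 4)
  | true, true => proj (3 * Real.pi / 4)

/-- Bob's CHSH measurement projections: `B⁰₀=[π/8]`, `B⁰₁=[5π/8]`,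
`B¹₀=[−π/8]`, `B¹₁=[3π/8]` (indexed by question `b` and answer `y`). -/
def Bop : Bool → Bool → Matrix (Fin 2) (Fin 2) ℂ
  | false, false => proj (Real.pi / 8)
  | false, true => proj (5 * Real.pi / 8)
  | true, false => proj (-Real.pi / 8)
  | true, true => proj (3 * Real.pi / 8)

lemma chsh_key (α β : ℝ) :
    (dotProduct (star chshPsi)
      ((Matrix.kroneckerMap (· * ·) (proj α) (proj β)).mulVec chshPsi)).re
    = (1/2) * Real.cos (α - β) ^ 2 := by
  simp only [dotProduct, Matrix.mulVec, Matrix.kroneckerMap, chshPsi, proj, ket,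
    Fintype.sum_prod_type, Fin.sum_univ_two, Prod.ext_iff, Prod.fst, Prod.snd]
  norm_num [Real.cos_sub, chshPsi, Prod.ext_iff]
  simp [Complex.cos_ofReal_re, Complex.sin_ofReal_re]
  ring_nf
  rw [Real.sq_sqrt (by norm_num : (0:ℝ) ≤ 2)]
  ring

/-- the explicit CHSH strategy given by the shared state
`|ψ⟩ = (|00⟩+|11⟩)/√2` and the projections `Aop`, `Bop` wins the CHSH game
with probability exactly `cos²(π/8)`:
`(1/4)·∑_{a,b} ∑_{x⊕y=a·b} ⟨ψ|A^a_x ⊗ B^b_y|ψ⟩ = cos²(π/8)`. -/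
theorem chsh_strategy_wins_cos_sq :
    (1 / 4 : ℝ) * ∑ a : Bool, ∑ b : Bool, ∑ x : Bool, ∑ y : Bool,
      (if xor x y = (a && b) then
          (dotProduct (star chshPsi)
            ((Matrix.kroneckerMap (· * ·) (Aop a x) (Bop b y)).mulVec chshPsi)).re
        else 0) = Real.cos (Real.pi / 8) ^ 2 := by
  simp only [Fintype.sum_bool, Aop, Bop, chsh_key]
  simp
  rw [show (3*Real.pi/4 - -Real.pi/8 : ℝ) = Real.pi - Real.pi/8 by ring,
    show (Real.pi/4 - 3*Real.pi/8 : ℝ) = -(Real.pi/8) by ring,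
    show (3*Real.pi/4 - 5*Real.pi/8 : ℝ) = Real.pi/8 by ring,
    show (Real.pi/4 - Real.pi/8 : ℝ) = Real.pi/8 by ring,
    show (Real.pi/2 - 3*Real.pi/8 : ℝ) = Real.pi/8 by ring,
    show (-Real.pi/8 : ℝ) = -(Real.pi/8) by ring,
    show (Real.pi/2 - 5*Real.pi/8 : ℝ) = -(Real.pi/8) by ring,
    Real.cos_neg, Real.cos_pi_sub, Real.cos_pi_div_eight]
  ring

end
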